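/- Assume: Ψ, ∂Ψ/∂r, Y, Q, Q' are continuous with Ψ(r,R) = ψ₃₀r³ + ψ₂₁r²R + ψ₁₂rR² + ψ₀₃R³ + o((|r|+|R|)³), ∂Ψ/∂r(r,R) = 3ψ₃₀r² + 2ψ₂₁rR + ψ₁₂R² + o((|r|+|R|)²), Y(r,R) = 1 + y₂₀r² + y₁₁rR + y₀₂R² + o((|r|+|R|)²), Q(r) = q₀r³ + o(r³), Q'(r) = 3q₀r² + o(r²), q₀ ≠ 0, ψ₃₀ > 0. Define Ψ₁ := Ψ − Q²/(2R), Y₁ := (1 − QQ'/(R·∂Ψ/∂r))·Y, u₁² := 2Ψ₁/R − 1 + Y₁², A(k) := −3q₀² + (k²ψ₁₂ + 2kψ₂₁ + 3ψ₃₀)·(k³ψ₀₃ + k³y₀₂ + k²ψ₁₂ + k²y₁₁ + kψ₂₁ + ky₂₀ + ψ₃₀), D(k) := 3ψ₃₀ + 2kψ₂₁ + k²ψ₁₂. Suppose there exists k₀ ∈ (0,1) with A(k₀) < 0, A(1) > 0, and D(k) > 0 for all k ∈ [k₀,1], and suppose ∂Ψ/∂r(r,R) > 0 for 0 < R ≤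 r small. Then there exists ε > 0 such that for every r ∈ (0,ε) there exists R ∈ (k₀r, r) with u₁²(r,R) = 0. -/

import Mathlib

open Filter Topology Asymptotics

/-- The charged velocity function
`u₁²(r,R) = 2Ψ₁/R − 1 + Y₁²`, with `Ψ₁ = Ψ − Q²/(2R)` and
`Y₁ = (1 − QQ'/(R·∂Ψ/∂r))·Y`. -/
noncomputable def u1sq (Ψ Ψr Y : ℝ → ℝ → ℝ) (Q Q' : ℝ → ℝ) (r R : ℝ) : ℝ :=
  2 * (Ψ r R - Q r ^ 2 / (2 * R)) / R - 1
    + ((1 - Q r * Q' r / (R * Ψr r R)) * Y r R) ^ 2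

/-- The polynomial `A(k)` of the paper (eq. (4.13)). -/
def Apoly (ψ30 ψ21 ψ12 ψ03 y20 y11 y02 q0 k : ℝ) : ℝ :=
  -3*q0^2 + (k^2*ψ12 + 2*k*ψ21 + 3*ψ30) *
    (k^3*ψ03 + k^3*y02 + k^2*ψ12 + k^2*y11 + k*ψ21 + k*y20 + ψ30)

private lemma tendsto_div_pow_of_littleo {f : ℝ → ℝ} {c : ℝ} {n : ℕ}
    (h : (fun r => f r - c * r ^ n) =o[𝓝[>] (0:ℝ)] fun r => r ^ n) :
    Tendsto (fun r => f r / r ^ n) (𝓝[>] (0:ℝ)) (𝓝 c) := by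
  have h1 := h.tendsto_div_nhds_zero
  have h2 := h1.add_const c
  rw [zero_add] at h2
  refine h2.congr' ?_
  filter_upwards [self_mem_nhdsWithin] with r hr
  have hrn : (r:ℝ) ^ n ≠ 0 := pow_ne_zero _ (ne_of_gt hr)
  field_simp
  ring

private lemma littleo_comp_line {F : ℝ × ℝ → ℝ} {n : ℕ} {k : ℝ} (hk : 0 < k)
    (h : F =o[𝓝 ((0:ℝ),(0:ℝ))] fun q => (|q.1| + |q.2|)^n) :
    (fun r : ℝ => F (r, k*r)) =o[𝓝[>] (0:ℝ)] fun r => r ^ n := by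
  have ht : Tendsto (fun r : ℝ => (r, k*r)) (𝓝[>] (0:ℝ)) (𝓝 ((0:ℝ),(0:ℝ))) := by
    have hc : Continuous fun r : ℝ => (r, k*r) :=
      continuous_id.prodMk (continuous_const.mul continuous_id)
    simpa using (hc.tendsto 0).mono_left nhdsWithin_le_nhds
  have h2 := h.comp_tendsto ht
  refine h2.trans_isBigO ?_
  rw [Asymptotics.isBigO_iff]
  refine ⟨(1+k)^n, ?_⟩
  filter_upwards [self_mem_nhdsWithin] with r hr
  have hr' : (0:ℝ) < r := hr
  have e1 : |r| + |k*r| = (1+k)*r := by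
    rw [abs_of_pos hr', abs_of_pos (mul_pos hk hr')]; ring
  show |((fun q : ℝ × ℝ => (|q.1| + |q.2|)^n) ((r, k*r)))| ≤ (1+k)^n * ‖r ^ n‖
  simp only
  rw [e1, mul_pow, Real.norm_eq_abs,
    abs_of_nonneg (by positivity : (0:ℝ) ≤ (1+k)^n * r^n),
    abs_of_nonneg (by positivity : (0:ℝ) ≤ r^n)]

private lemma u1sq_div_sq_tendsto
    (Ψ Ψr Y : ℝ → ℝ → ℝ) (Q Q' : ℝ → ℝ)
    (ψ30 ψ21 ψ12 ψ03 y20 y11 y02 q0 : ℝ)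
    (hΨ : (fun q : ℝ × ℝ =>
        Ψ q.1 q.2 - (ψ30*q.1^3 + ψ21*q.1^2*q.2 + ψ12*q.1*q.2^2 + ψ03*q.2^3))
      =o[nhds ((0:ℝ), (0:ℝ))] fun q : ℝ × ℝ => (|q.1| + |q.2|)^3)
    (hΨr : (fun q : ℝ × ℝ =>
        Ψr q.1 q.2 - (3*ψ30*q.1^2 + 2*ψ21*q.1*q.2 + ψ12*q.2^2))
      =o[nhds ((0:ℝ), (0:ℝ))] fun q : ℝ × ℝ => (|q.1| + |q.2|)^2)
    (hY : (fun q : ℝ × ℝ =>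
        Y q.1 q.2 - (1 + y20*q.1^2 + y11*q.1*q.2 + y02*q.2^2))
      =o[nhds ((0:ℝ), (0:ℝ))] fun q : ℝ × ℝ => (|q.1| + |q.2|)^2)
    (hQ : (fun r : ℝ => Q r - q0 * r^3) =o[𝓝[>] (0:ℝ)] fun r : ℝ => r^3)
    (hQ' : (fun r : ℝ => Q' r - 3 * q0 * r^2) =o[𝓝[>] (0:ℝ)] fun r : ℝ => r^2)
    (δ : ℝ) (hδ : 0 < δ)
    (hpos : ∀ r R : ℝ, 0 < R → R ≤ r → r < δ → 0 < Ψr r R)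
    (k : ℝ) (hk0 : 0 < k) (hk1 : k ≤ 1)
    (hDk : 0 < 3*ψ30 + 2*k*ψ21 + k^2*ψ12) :
    Tendsto (fun r => u1sq Ψ Ψr Y Q Q' r (k*r) / r^2) (𝓝[>] (0:ℝ))
      (𝓝 (2 * Apoly ψ30 ψ21 ψ12 ψ03 y20 y11 y02 q0 k /
        (k * (3*ψ30 + 2*k*ψ21 + k^2*ψ12)))) := by
  set l := 𝓝[>] (0:ℝ)
  have hkne : k ≠ 0 := ne_of_gt hk0
  have hDne : (3*ψ30 + 2*k*ψ21 + k^2*ψ12) ≠ 0 := ne_of_gt hDk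
  have hr2 : Tendsto (fun r : ℝ => r^2) l (𝓝 0) := by
    have h0 := ((continuous_pow 2 : Continuous fun r : ℝ => r^2).tendsto 0).mono_left
      (nhdsWithin_le_nhds (s := Set.Ioi (0:ℝ)))
    simpa using h0
  have hqt : Tendsto (fun r => Q r / r^3) l (𝓝 q0) :=
    tendsto_div_pow_of_littleo (n := 3) (c := q0) hQ
  have hq't : Tendsto (fun r => Q' r / r^2) l (𝓝 (3*q0)) :=
    tendsto_div_pow_of_littleo (n := 2) (c := 3*q0) hQ'
  have hΨt : Tendsto (fun r => Ψ r (k*r) / r^3) l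
      (𝓝 (ψ30 + ψ21*k + ψ12*k^2 + ψ03*k^3)) := by
    apply tendsto_div_pow_of_littleo (n := 3)
    have h1 := littleo_comp_line hk0 hΨ
    exact h1.congr (fun r => by simp only; ring) (fun r => rfl)
  have hΨrt : Tendsto (fun r => Ψr r (k*r) / r^2) l
      (𝓝 (3*ψ30 + 2*k*ψ21 + k^2*ψ12)) := by
    apply tendsto_div_pow_of_littleo (n := 2)
    have h1 := littleo_comp_line hk0 hΨr
    exact h1.congr (fun r => by simp only; ring) (fun r => rfl)
  have hct : Tendsto (fun r => (Y r (k*r) - 1) / r^2) l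
      (𝓝 (y20 + y11*k + y02*k^2)) := by
    apply tendsto_div_pow_of_littleo (n := 2)
    have h1 := littleo_comp_line hk0 hY
    exact h1.congr (fun r => by simp only; ring) (fun r => rfl)
  have hYone : Tendsto (fun r => Y r (k*r)) l (𝓝 1) := by
    have h2 := (hct.mul hr2).add_const 1
    rw [mul_zero, zero_add] at h2
    refine h2.congr' ?_
    filter_upwards [self_mem_nhdsWithin] with r hr
    have : (r:ℝ)^2 ≠ 0 := pow_ne_zero _ (ne_of_gt hr)
    rw [div_mul_cancel₀ _ this]; ring
  -- m and its limit
  have hm : Tendsto (fun r => (Y r (k*r) - 1)/r^2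
      - (Q r/r^3) * (Q' r/r^2) * (Y r (k*r)) / (k * (Ψr r (k*r)/r^2))) l
      (𝓝 ((y20 + y11*k + y02*k^2)
        - q0 * (3*q0) * 1 / (k * (3*ψ30 + 2*k*ψ21 + k^2*ψ12)))) := by
    exact hct.sub (((hqt.mul hq't).mul hYone).div
      (tendsto_const_nhds.mul hΨrt) (by positivity))
  set yk := y20 + y11*k + y02*k^2 with hykdef
  set Dk := 3*ψ30 + 2*k*ψ21 + k^2*ψ12 with hDkdef
  set M := yk - q0 * (3*q0) * 1 / (k * Dk) with hMdef
  set Pk := ψ30 + ψ21*k + ψ12*k^2 + ψ03*k^3 with hPkdef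
  set m : ℝ → ℝ := fun r => (Y r (k*r) - 1)/r^2
      - (Q r/r^3) * (Q' r/r^2) * (Y r (k*r)) / (k * (Ψr r (k*r)/r^2)) with hmdef
  -- g and its limit
  have hg : Tendsto (fun r => 2 * (Ψ r (k*r)/r^3) / k
      - (Q r/r^3) * (Q r/r^3) * r^2 / k^2
      + m r * (2 + m r * r^2)) l
      (𝓝 (2 * Pk / k - q0 * q0 * 0 / k^2 + M * (2 + M * 0))) := by
    exact (((tendsto_const_nhds.mul hΨt).div_const k).sub
      (((hqt.mul hqt).mul hr2).div_const (k^2))).add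
      (hm.mul (tendsto_const_nhds.add (hm.mul hr2)))
  have hL : 2 * Pk / k - q0 * q0 * 0 / k^2 + M * (2 + M * 0)
      = 2 * Apoly ψ30 ψ21 ψ12 ψ03 y20 y11 y02 q0 k / (k * Dk) := by
    have hkDne : k * Dk ≠ 0 := by positivity
    rw [hMdef, hPkdef, hykdef]
    simp only [Apoly]
    field_simp
    rw [hDkdef]
    ring
  rw [hL] at hg
  refine hg.congr' ?_
  filter_upwards [self_mem_nhdsWithin, Ioo_mem_nhdsGT_of_mem (by
    constructor <;> simp [hδ] : (0:ℝ) ∈ Set.Ico (0:ℝ) δ)] with r hr hrδ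
  have hr0 : (0:ℝ) < r := hr
  have hrne : r ≠ 0 := ne_of_gt hr0
  have hB : (0:ℝ) < Ψr r (k*r) :=
    hpos r (k*r) (mul_pos hk0 hr0) (by nlinarith) hrδ.2
  have hBne : Ψr r (k*r) ≠ 0 := ne_of_gt hB
  simp only [hmdef, u1sq]
  field_simp
  ring

/-- When `A` changes sign on `(0,1)`, the curve where `u₁²` vanishes exists:
for small `r` there is `R ∈ (k₀r, r)` with `u₁²(r,R) = 0`. -/
theorem u1sq_vanishing_curve_exists
    (Ψ Ψr Y : ℝ → ℝ → ℝ) (Q Q' : ℝ → ℝ)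
    (ψ30 ψ21 ψ12 ψ03 y20 y11 y02 q0 : ℝ)
    (hψ30 : 0 < ψ30) (hq0 : q0 ≠ 0)
    (hΨc : Continuous (fun q : ℝ × ℝ => Ψ q.1 q.2))
    (hΨrc : Continuous (fun q : ℝ × ℝ => Ψr q.1 q.2))
    (hYc : Continuous (fun q : ℝ × ℝ => Y q.1 q.2))
    (hQc : Continuous Q) (hQ'c : Continuous Q')
    (hlink : ∀ r R, HasDerivAt (fun s => Ψ s R) (Ψr r R) r)
    (hQd : ∀ r, HasDerivAt Q (Q' r) r)
    (hΨ : (fun q : ℝ × ℝ =>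
        Ψ q.1 q.2 - (ψ30*q.1^3 + ψ21*q.1^2*q.2 + ψ12*q.1*q.2^2 + ψ03*q.2^3))
      =o[nhds ((0:ℝ), (0:ℝ))] fun q : ℝ × ℝ => (|q.1| + |q.2|)^3)
    (hΨr : (fun q : ℝ × ℝ =>
        Ψr q.1 q.2 - (3*ψ30*q.1^2 + 2*ψ21*q.1*q.2 + ψ12*q.2^2))
      =o[nhds ((0:ℝ), (0:ℝ))] fun q : ℝ × ℝ => (|q.1| + |q.2|)^2)
    (hY : (fun q : ℝ × ℝ =>
        Y q.1 q.2 - (1 + y20*q.1^2 + y11*q.1*q.2 + y02*q.2^2))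
      =o[nhds ((0:ℝ), (0:ℝ))] fun q : ℝ × ℝ => (|q.1| + |q.2|)^2)
    (hQ : (fun r : ℝ => Q r - q0 * r^3) =o[𝓝[>] (0:ℝ)] fun r : ℝ => r^3)
    (hQ' : (fun r : ℝ => Q' r - 3 * q0 * r^2) =o[𝓝[>] (0:ℝ)] fun r : ℝ => r^2)
    (k₀ : ℝ) (hk₀ : k₀ ∈ Set.Ioo (0:ℝ) 1)
    (hAk₀ : Apoly ψ30 ψ21 ψ12 ψ03 y20 y11 y02 q0 k₀ < 0)
    (hA1 : 0 < Apoly ψ30 ψ21 ψ12 ψ03 y20 y11 y02 q0 1)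
    (hD : ∀ k ∈ Set.Icc k₀ 1, 0 < 3*ψ30 + 2*k*ψ21 + k^2*ψ12)
    (hpos : ∃ δ > 0, ∀ r R : ℝ, 0 < R → R ≤ r → r < δ → 0 < Ψr r R) :
    ∃ ε > 0, ∀ r ∈ Set.Ioo (0:ℝ) ε,
      ∃ R ∈ Set.Ioo (k₀ * r) r, u1sq Ψ Ψr Y Q Q' r R = 0 := by
  obtain ⟨δ, hδ, hpos⟩ := hpos
  -- choose k₁ ∈ (k₀, 1) with A(k₁) > 0
  have hAcont : Continuous (Apoly ψ30 ψ21 ψ12 ψ03 y20 y11 y02 q0) := by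
    unfold Apoly; fun_prop
  have hU : {k : ℝ | 0 < Apoly ψ30 ψ21 ψ12 ψ03 y20 y11 y02 q0 k} ∈ 𝓝 (1:ℝ) :=
    (isOpen_lt continuous_const hAcont).mem_nhds hA1
  have hmem : {k : ℝ | 0 < Apoly ψ30 ψ21 ψ12 ψ03 y20 y11 y02 q0 k} ∩ Set.Ioo k₀ 1
      ∈ 𝓝[<] (1:ℝ) :=
    Filter.inter_mem (nhdsWithin_le_nhds hU)
      (Ioo_mem_nhdsLT_of_mem ⟨hk₀.2, le_refl 1⟩)
  obtain ⟨k₁, hk₁A, hk₁⟩ := Filter.nonempty_of_mem hmem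
  have hDk₀ := hD k₀ ⟨le_refl _, hk₀.2.le⟩
  have hDk₁ := hD k₁ ⟨hk₁.1.le, hk₁.2.le⟩
  have ht0 := u1sq_div_sq_tendsto Ψ Ψr Y Q Q' ψ30 ψ21 ψ12 ψ03 y20 y11 y02 q0
    hΨ hΨr hY hQ hQ' δ hδ hpos k₀ hk₀.1 hk₀.2.le hDk₀
  have ht1 := u1sq_div_sq_tendsto Ψ Ψr Y Q Q' ψ30 ψ21 ψ12 ψ03 y20 y11 y02 q0
    hΨ hΨr hY hQ hQ' δ hδ hpos k₁ (hk₀.1.trans hk₁.1) hk₁.2.le hDk₁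
  have hL0 : 2 * Apoly ψ30 ψ21 ψ12 ψ03 y20 y11 y02 q0 k₀ /
      (k₀ * (3*ψ30 + 2*k₀*ψ21 + k₀^2*ψ12)) < 0 :=
    div_neg_of_neg_of_pos (by linarith) (mul_pos hk₀.1 hDk₀)
  have hL1 : 0 < 2 * Apoly ψ30 ψ21 ψ12 ψ03 y20 y11 y02 q0 k₁ /
      (k₁ * (3*ψ30 + 2*k₁*ψ21 + k₁^2*ψ12)) :=
    div_pos (by linarith [Set.mem_setOf_eq ▸ hk₁A]) (mul_pos (hk₀.1.trans hk₁.1) hDk₁)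
  have hev : ∀ᶠ r in 𝓝[>] (0:ℝ),
      u1sq Ψ Ψr Y Q Q' r (k₀*r) / r^2 < 0 ∧
      0 < u1sq Ψ Ψr Y Q Q' r (k₁*r) / r^2 ∧ r < δ := by
    filter_upwards [ht0.eventually_lt_const hL0, ht1.eventually_const_lt hL1,
      Ioo_mem_nhdsGT_of_mem (⟨le_refl 0, hδ⟩ : (0:ℝ) ∈ Set.Ico (0:ℝ) δ)] with r h1 h2 h3
    exact ⟨h1, h2, h3.2⟩
  rw [eventually_iff, mem_nhdsGT_iff_exists_Ioo_subset] at hev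
  obtain ⟨ε, hε, hsub⟩ := hev
  refine ⟨ε, hε, fun r hr => ?_⟩
  obtain ⟨h0, h1, hrδ⟩ := hsub hr
  have hr0 : (0:ℝ) < r := hr.1
  have hr2 : (0:ℝ) < r^2 := by positivity
  have hv0 : u1sq Ψ Ψr Y Q Q' r (k₀*r) < 0 := by
    have := mul_neg_of_neg_of_pos h0 hr2
    rwa [div_mul_cancel₀ _ (ne_of_gt hr2)] at this
  have hv1 : 0 < u1sq Ψ Ψr Y Q Q' r (k₁*r) := by
    have := mul_pos h1 hr2
    rwa [div_mul_cancel₀ _ (ne_of_gt hr2)] at this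
  -- continuity on [k₀r, k₁r]
  set S := Set.Icc (k₀*r) (k₁*r) with hSdef
  have hRpos : ∀ R ∈ S, (0:ℝ) < R := fun R hR =>
    lt_of_lt_of_le (mul_pos hk₀.1 hr0) hR.1
  have hRler : ∀ R ∈ S, R ≤ r := fun R hR =>
    hR.2.trans (by nlinarith [hk₁.2])
  have hΨrpos : ∀ R ∈ S, 0 < Ψr r R := fun R hR =>
    hpos r R (hRpos R hR) (hRler R hR) hrδ
  have hcont : ContinuousOn (fun R => u1sq Ψ Ψr Y Q Q' r R) S := by
    have cΨ : Continuous (fun R : ℝ => Ψ r R) :=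
      hΨc.comp (continuous_const.prodMk continuous_id)
    have cΨr : Continuous (fun R : ℝ => Ψr r R) :=
      hΨrc.comp (continuous_const.prodMk continuous_id)
    have cY : Continuous (fun R : ℝ => Y r R) :=
      hYc.comp (continuous_const.prodMk continuous_id)
    unfold u1sq
    apply ContinuousOn.add
    · apply ContinuousOn.sub _ continuousOn_const
      apply ContinuousOn.div
      · apply ContinuousOn.mul continuousOn_const
        apply ContinuousOn.sub cΨ.continuousOn
        apply ContinuousOn.div continuousOn_const
          (continuous_const.mul continuous_id).continuousOn
        exact fun R hR => mul_ne_zero two_ne_zero (ne_of_gt (hRpos R hR))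
      · exact continuous_id.continuousOn
      · exact fun R hR => ne_of_gt (hRpos R hR)
    · apply ContinuousOn.pow
      apply ContinuousOn.mul _ cY.continuousOn
      apply ContinuousOn.sub continuousOn_const
      apply ContinuousOn.div continuousOn_const
        (continuous_id.mul cΨr).continuousOn
      exact fun R hR => mul_ne_zero (ne_of_gt (hRpos R hR)) (ne_of_gt (hΨrpos R hR))
  have hle : k₀*r ≤ k₁*r := by nlinarith [hk₁.1]
  have hivt := intermediate_value_Icc hle hcont
  have h0mem : (0:ℝ) ∈ Set.Icc (u1sq Ψ Ψr Y Q Q' r (k₀*r)) (u1sq Ψ Ψr Y Q Q' r (k₁*r)) :=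
    ⟨hv0.le, hv1.le⟩
  obtain ⟨R, hRmem, hfR⟩ := hivt h0mem
  refine ⟨R, ⟨?_, ?_⟩, hfR⟩
  · rcases lt_or_eq_of_le hRmem.1 with h | h
    · exact h
    · exfalso
      rw [← h] at hfR
      simp only at hfR
      exact absurd hfR (ne_of_lt hv0)
  · exact lt_of_le_of_lt hRmem.2 (by nlinarith [hk₁.2])
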